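/- arXiv:2212.08018 — 4 statements merged into one kernel-verified Lean document; each statement's English description precedes it below -/
import Mathlib

section
/- Let A be a d×d symmetric positive definite real matrix with eigenvalues λ₁,…,λ_d > 0. Then Σ_{j=1}^d (λ_j − 1 − log λ_j) ≤ ‖A − I‖_F · ‖I − A^{-1}‖_F. (In the analysis of the Gaussian Sampling Mechanism with A = Σ₁^{1/2}Σ₂^{-1}Σ₁^{1/2}, the expected privacy loss of releasing k samples equals (k/2)·Σ_j(λ_j − 1 − log λ_j), so this inequality bounds it by (k/2)·‖A−I‖_F·‖I−A^{-1}‖_F.) -/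
open MeasureTheory Matrix Real
open scoped ENNReal NNReal BigOperators

noncomputable section

instance {m n : Type*} {α : Type*} [MeasurableSpace α] : MeasurableSpace (Matrix m n α) :=
  inferInstanceAs (MeasurableSpace (m → n → α))

/-- The density of the multivariate Gaussian `N(μ, S)` on `ℝ^d`. -/
def gaussianDensity {d : ℕ} (μ : Fin d → ℝ) (S : Matrix (Fin d) (Fin d) ℝ)
    (x : Fin d → ℝ) : ℝ :=
  (2 * Real.pi) ^ (-(d : ℝ) / 2) * S.det ^ (-(1 : ℝ) / 2) *
    Real.exp (-(dotProduct (x - μ) (S⁻¹.mulVec (x - μ))) / 2)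

/-- The multivariate Gaussian measure `N(μ, S)` on `ℝ^d`. -/
def gaussianMeasure {d : ℕ} (μ : Fin d → ℝ) (S : Matrix (Fin d) (Fin d) ℝ) :
    Measure (Fin d → ℝ) :=
  volume.withDensity fun x => ENNReal.ofReal (gaussianDensity μ S x)

/-- The law `N(μ, S)^⊗n` of `n` i.i.d. samples from `N(μ, S)`. -/
def gaussianPi {d : ℕ} (n : ℕ) (μ : Fin d → ℝ) (S : Matrix (Fin d) (Fin d) ℝ) :
    Measure (Fin n → Fin d → ℝ) :=
  Measure.pi fun _ => gaussianMeasure μ S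

/-- Total variation distance between measures. -/
def tvDist {E : Type*} [MeasurableSpace E] (P Q : Measure E) : ℝ :=
  ⨆ S : {S : Set E // MeasurableSet S}, |(P S.1).toReal - (Q S.1).toReal|

/-- Frobenius norm of a matrix. -/
def frobNorm {d : ℕ} (A : Matrix (Fin d) (Fin d) ℝ) : ℝ :=
  Real.sqrt (∑ i, ∑ j, (A i j) ^ 2)

/-- Euclidean norm of a vector. -/
def vecNorm {d : ℕ} (v : Fin d → ℝ) : ℝ := Real.sqrt (∑ i, (v i) ^ 2)

/-- `psdLE A B` is the Loewner order `A ⪯ B`, i.e. `B - A` is positive semidefinite. -/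
def psdLE {d : ℕ} (A B : Matrix (Fin d) (Fin d) ℝ) : Prop := (B - A).PosSemidef

/-- Two datasets are neighboring if they differ in at most one coordinate. -/
def Neighbor {n : ℕ} {α : Type*} (x x' : Fin n → α) : Prop :=
  ∃ j, ∀ i, i ≠ j → x i = x' i

/-- Pure `ε`-differential privacy of a mechanism. -/
def PureDP {n : ℕ} {α : Type*} {Ω : Type*} [MeasurableSpace Ω]
    (M : (Fin n → α) → Measure Ω) (ε : ℝ) : Prop :=
  ∀ x x', Neighbor x x' → ∀ S : Set Ω, MeasurableSet S →
    M x S ≤ ENNReal.ofReal (Real.exp ε) * M x' S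

/-- Approximate `(ε, δ)`-differential privacy of a mechanism. -/
def ApproxDP {n : ℕ} {α : Type*} {Ω : Type*} [MeasurableSpace Ω]
    (M : (Fin n → α) → Measure Ω) (ε δ : ℝ) : Prop :=
  ∀ x x', Neighbor x x' → ∀ S : Set Ω, MeasurableSet S →
    M x S ≤ ENNReal.ofReal (Real.exp ε) * M x' S + ENNReal.ofReal δ

/-- Unnormalized entropy `Ent(x) = ∑ᵢ (xᵢ log(1/xᵢ) + xᵢ)`
(with the convention `0 · log(1/0) = 0`, automatic in Lean). -/
def Ent {n : ℕ} (x : Fin n → ℝ) : ℝ := ∑ i, (x i * Real.log (1 / x i) + x i)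

end

noncomputable section


lemma frob_eq_sqrt_trace {d : ℕ} (M : Matrix (Fin d) (Fin d) ℝ) :
    frobNorm M = Real.sqrt ((Mᵀ * M).trace) := by
  unfold frobNorm
  congr 1
  rw [Matrix.trace, Finset.sum_comm]
  simp [Matrix.diag, Matrix.mul_apply, sq]

lemma frob_conj {d : ℕ} (U : Matrix.unitaryGroup (Fin d) ℝ) (v : Fin d → ℝ) :
    frobNorm ((U : Matrix (Fin d) (Fin d) ℝ) * Matrix.diagonal v *
      star (U : Matrix (Fin d) (Fin d) ℝ)) = Real.sqrt (∑ j, v j ^ 2) := by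
  have hstar : star (U : Matrix (Fin d) (Fin d) ℝ) = (U : Matrix (Fin d) (Fin d) ℝ)ᵀ := by
    ext i j; simp [Matrix.star_apply]
  have hUtU : (U : Matrix (Fin d) (Fin d) ℝ)ᵀ * (U : Matrix (Fin d) (Fin d) ℝ) = 1 := by
    rw [← hstar]; exact Unitary.coe_star_mul_self U
  rw [frob_eq_sqrt_trace, hstar]
  congr 1
  rw [Matrix.transpose_mul, Matrix.transpose_mul, Matrix.transpose_transpose,
    Matrix.diagonal_transpose]
  calc ((U : Matrix (Fin d) (Fin d) ℝ)ᵀᵀ * (Matrix.diagonal v * (U:Matrix (Fin d) (Fin d) ℝ)ᵀ) *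
        ((U : Matrix (Fin d) (Fin d) ℝ) * Matrix.diagonal v * (U:Matrix (Fin d) (Fin d) ℝ)ᵀ)).trace
      = ((U : Matrix (Fin d) (Fin d) ℝ) * (Matrix.diagonal v * Matrix.diagonal v) *
        (U : Matrix (Fin d) (Fin d) ℝ)ᵀ).trace := by
        rw [Matrix.transpose_transpose]
        congr 1
        rw [show (U:Matrix (Fin d) (Fin d) ℝ) * (Matrix.diagonal v * (U:Matrix (Fin d) (Fin d) ℝ)ᵀ) *
            ((U : Matrix (Fin d) (Fin d) ℝ) * Matrix.diagonal v * (U:Matrix (Fin d) (Fin d) ℝ)ᵀ) =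
            (U:Matrix (Fin d) (Fin d) ℝ) * Matrix.diagonal v *
            ((U:Matrix (Fin d) (Fin d) ℝ)ᵀ * (U : Matrix (Fin d) (Fin d) ℝ)) *
            (Matrix.diagonal v * (U:Matrix (Fin d) (Fin d) ℝ)ᵀ) by simp only [Matrix.mul_assoc]]
        rw [hUtU, mul_one]
        simp only [Matrix.mul_assoc]
    _ = ∑ j, v j ^ 2 := by
        rw [Matrix.trace_mul_cycle, ← Matrix.mul_assoc, hUtU, one_mul,
          Matrix.diagonal_mul_diagonal, Matrix.trace_diagonal]
        simp [sq]

lemma ptwise_epl {x : ℝ} (hx : 0 < x) :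
    x - 1 - Real.log x ≤ (x - 1) * (1 - x⁻¹) := by
  have h1 : Real.log x⁻¹ ≤ x⁻¹ - 1 := Real.log_le_sub_one_of_pos (by positivity)
  rw [Real.log_inv] at h1
  have h2 : (x - 1) * x⁻¹ = 1 - x⁻¹ := by field_simp
  nlinarith

lemma ptwise_nonneg_epl {x : ℝ} (hx : 0 < x) : 0 ≤ (x - 1) * (1 - x⁻¹) := by
  have h2 : (x - 1) * x⁻¹ = 1 - x⁻¹ := by field_simp
  rcases le_or_gt 1 x with h | h
  · nlinarith [inv_nonneg.mpr hx.le, inv_le_one_of_one_le₀ h]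
  · nlinarith [inv_pos.mpr hx, (one_lt_inv_iff₀.mpr ⟨hx, h⟩)]

lemma cauchy_epl {d : ℕ} (a b : Fin d → ℝ) (h : ∀ j, 0 ≤ a j * b j) :
    ∑ j, a j * b j ≤ Real.sqrt (∑ j, a j ^ 2) * Real.sqrt (∑ j, b j ^ 2) := by
  rw [← Real.sqrt_mul (by positivity)]
  rw [show (∑ j, a j * b j) = Real.sqrt ((∑ j, a j * b j)^2) by
    rw [Real.sqrt_sq (Finset.sum_nonneg fun j _ => h j)]]
  exact Real.sqrt_le_sqrt (Finset.sum_mul_sq_le_sq_mul_sq _ _ _)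

/-- For a symmetric positive definite matrix `A` with eigenvalues `λⱼ > 0`,
`∑ⱼ (λⱼ - 1 - log λⱼ) ≤ ‖A - I‖_F · ‖I - A⁻¹‖_F`. -/
theorem expected_privacy_loss_bound {d : ℕ}
    (A : Matrix (Fin d) (Fin d) ℝ) (hA : A.PosDef) :
    ∑ j, (hA.1.eigenvalues j - 1 - Real.log (hA.1.eigenvalues j))
      ≤ frobNorm (A - 1) * frobNorm (1 - A⁻¹) := by
  set lam := hA.1.eigenvalues with hlam
  set U : Matrix (Fin d) (Fin d) ℝ :=
    (Matrix.IsHermitian.eigenvectorUnitary hA.1 : Matrix (Fin d) (Fin d) ℝ) with hU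
  have hspec : A = U * Matrix.diagonal lam * star U := by
    have := hA.1.spectral_theorem
    simpa using this
  have hUsU : star U * U = 1 := Unitary.coe_star_mul_self _
  have hUUs : U * star U = 1 := Unitary.coe_mul_star_self _
  have hpos : ∀ j, 0 < lam j := hA.eigenvalues_pos
  have hone : (1 : Matrix (Fin d) (Fin d) ℝ) = U * Matrix.diagonal (fun _ => (1:ℝ)) * star U := by
    rw [Matrix.diagonal_one, mul_one, hUUs]
  have hsub : A - 1 = U * Matrix.diagonal (fun j => lam j - 1) * star U := by
    rw [hspec, hone]
    rw [show (Matrix.diagonal fun j => lam j - 1) =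
      Matrix.diagonal lam - Matrix.diagonal (fun _ => (1:ℝ)) from (Matrix.diagonal_sub _ _).symm]
    noncomm_ring
  have hinv : A⁻¹ = U * Matrix.diagonal (fun j => (lam j)⁻¹) * star U := by
    apply Matrix.inv_eq_right_inv
    rw [hspec]
    calc U * Matrix.diagonal lam * star U * (U * Matrix.diagonal (fun j => (lam j)⁻¹) * star U)
        = U * Matrix.diagonal lam * (star U * U) *
            (Matrix.diagonal (fun j => (lam j)⁻¹) * star U) := by
          simp only [Matrix.mul_assoc]
      _ = 1 := by
          rw [hUsU, mul_one, Matrix.mul_assoc, ← Matrix.mul_assoc (Matrix.diagonal lam),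
            Matrix.diagonal_mul_diagonal]
          have h1 : (fun j => lam j * (lam j)⁻¹) = fun _ => (1:ℝ) := by
            funext j; exact mul_inv_cancel₀ (hpos j).ne'
          rw [h1, Matrix.diagonal_one, one_mul, hUUs]
  have hsub2 : (1 : Matrix (Fin d) (Fin d) ℝ) - A⁻¹ =
      U * Matrix.diagonal (fun j => 1 - (lam j)⁻¹) * star U := by
    rw [hinv, hone]
    rw [show (Matrix.diagonal fun j => 1 - (lam j)⁻¹) =
      Matrix.diagonal (fun _ => (1:ℝ)) - Matrix.diagonal (fun j => (lam j)⁻¹) from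
      (Matrix.diagonal_sub _ _).symm]
    noncomm_ring
  have e1 : frobNorm (A - 1) = Real.sqrt (∑ j, (lam j - 1) ^ 2) := by
    rw [hsub]; exact frob_conj _ _
  have e2 : frobNorm (1 - A⁻¹) = Real.sqrt (∑ j, (1 - (lam j)⁻¹) ^ 2) := by
    rw [hsub2]; exact frob_conj _ _
  rw [e1, e2]
  calc ∑ j, (lam j - 1 - Real.log (lam j))
      ≤ ∑ j, (lam j - 1) * (1 - (lam j)⁻¹) :=
        Finset.sum_le_sum fun j _ => ptwise_epl (hpos j)
    _ ≤ Real.sqrt (∑ j, (lam j - 1) ^ 2) * Real.sqrt (∑ j, (1 - (lam j)⁻¹) ^ 2) :=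
        cauchy_epl _ _ fun j => ptwise_nonneg_epl (hpos j)


end
end

section
/- Let n ≥ 3 and let x, x' ∈ ℝ^n satisfy 0 ≤ x_i ≤ x'_i ≤ 2/n for every i ∈ {1,…,n}. Then Ent(x') − Ent(x) ≥ log(n/2) · ‖x' − x‖₁, where ‖y‖₁ = Σ_{i=1}^n |y_i|. (This is the strong-convexity-type estimate for the unnormalized entropy, used to convert a bound on the potential difference of two stabilized convex-program solutions into an ℓ₁ sensitivity bound of order L/(n·log n).) -/
open MeasureTheory Matrix Real
open scoped ENNReal NNReal BigOperators

noncomputable section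


lemma ent_aux (c a b : ℝ) (ha : 0 ≤ a) (hab : a ≤ b) (hbc : b ≤ c) :
    -Real.log c * (b - a) ≤ (b * Real.log (1 / b) + b) - (a * Real.log (1 / a) + a) := by
  rcases eq_or_lt_of_le (ha.trans hab) with hb | hb
  · have ha0 : a = 0 := le_antisymm (hab.trans hb.symm.le) ha
    simp [ha0, ← hb]
  · have hlogb : Real.log b ≤ Real.log c := Real.log_le_log hb hbc
    have key : a * Real.log b - a * Real.log a ≤ b - a := by
      rcases eq_or_lt_of_le ha with ha0 | ha0
      · simp [← ha0]; linarith
      · have h1 := Real.log_le_sub_one_of_pos (show 0 < b / a from div_pos hb ha0)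
        rw [Real.log_div hb.ne' ha0.ne'] at h1
        have h2 := mul_le_mul_of_nonneg_left h1 ha
        have : a * (b / a) = b := by field_simp
        nlinarith
    rw [one_div, one_div, Real.log_inv, Real.log_inv]
    nlinarith [mul_le_mul_of_nonneg_right hlogb (sub_nonneg.2 hab)]

/-- **Strong-convexity-type estimate for the unnormalized entropy.**
If `0 ≤ xᵢ ≤ x'ᵢ ≤ 2/n` for all `i`, then
`Ent(x') - Ent(x) ≥ log(n/2) · ‖x' - x‖₁`. -/
theorem ent_strong_convexity {n : ℕ} (hn : 3 ≤ n) (x x' : Fin n → ℝ)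
    (h : ∀ i, 0 ≤ x i ∧ x i ≤ x' i ∧ x' i ≤ 2 / n) :
    Real.log ((n : ℝ) / 2) * (∑ i, |x' i - x i|) ≤ Ent x' - Ent x := by
  have hn0 : (0:ℝ) < n := by positivity
  have hc : (0:ℝ) < 2 / n := by positivity
  have hlog : Real.log ((n : ℝ) / 2) = -Real.log (2 / (n : ℝ)) := by
    rw [← Real.log_inv]; congr 1; field_simp
  rw [hlog, Ent, Ent, ← Finset.sum_sub_distrib, Finset.mul_sum]
  apply Finset.sum_le_sum
  intro i _
  obtain ⟨h1, h2, h3⟩ := h i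
  rw [abs_of_nonneg (sub_nonneg.2 h2)]
  exact ent_aux _ _ _ h1 h2 h3


end
end

section
/- Let d ∈ ℕ, κ ≥ 20, and let Σ, Σ̂ be d×d real symmetric matrices with I ⪯ Σ ⪯ κ·I and ‖Σ̂ − Σ‖_F ≤ 0.01·κ. Let V be the span of all eigenvectors of Σ̂ with eigenvalue at least κ/2, let Π be the orthogonal projection onto V, and set A₀ = 0.9·Π + (I − Π). Then 0.85·I ⪯ A₀ΣA₀ ⪯ 0.83·κ·I; consequently, the matrix A = √1.19·A₀ satisfies I ⪯ AΣA ⪯ 0.99·κ·I. (This is the deterministic core of the one-round weak private preconditioning step: any rough covariance estimate accurate to 0.01κ in Frobenius norm yields a preconditioner reducing the condition number by a constant factor.) -/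
open MeasureTheory Matrix Real
open scoped ENNReal NNReal BigOperators

noncomputable section

section aux

lemma frob_bilin_bound {d : ℕ} (E : Matrix (Fin d) (Fin d) ℝ) (x y : Fin d → ℝ) :
    |x ⬝ᵥ E *ᵥ y| ≤ frobNorm E * (Real.sqrt (∑ i, x i ^ 2) * Real.sqrt (∑ i, y i ^ 2)) := by
  have h1 : (x ⬝ᵥ E *ᵥ y)^2 ≤ (∑ i, x i ^2) * (∑ i, ((E *ᵥ y) i)^2) := by
    simpa [dotProduct] using Finset.sum_mul_sq_le_sq_mul_sq Finset.univ x (E *ᵥ y)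
  have h2 : ∀ i : Fin d, ((E *ᵥ y) i)^2 ≤ (∑ j, (E i j)^2) * (∑ j, (y j)^2) := fun i => by
    simpa [mulVec, dotProduct] using Finset.sum_mul_sq_le_sq_mul_sq Finset.univ (E i) y
  have h3 : (∑ i, ((E *ᵥ y) i)^2) ≤ (∑ i, ∑ j, (E i j)^2) * (∑ j, (y j)^2) := by
    rw [Finset.sum_mul]; exact Finset.sum_le_sum fun i _ => h2 i
  have hx0 : (0:ℝ) ≤ ∑ i, x i ^2 := Finset.sum_nonneg fun i _ => sq_nonneg _
  have hE0 : (0:ℝ) ≤ ∑ i, ∑ j, (E i j)^2 :=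
    Finset.sum_nonneg fun i _ => Finset.sum_nonneg fun j _ => sq_nonneg _
  have hz : (x ⬝ᵥ E *ᵥ y)^2 ≤ (∑ i, ∑ j, (E i j)^2) * ((∑ i, x i^2) * (∑ j, (y j)^2)) := by
    calc (x ⬝ᵥ E *ᵥ y)^2 ≤ (∑ i, x i ^2) * (∑ i, ((E *ᵥ y) i)^2) := h1
    _ ≤ (∑ i, x i ^2) * ((∑ i, ∑ j, (E i j)^2) * (∑ j, (y j)^2)) :=
        mul_le_mul_of_nonneg_left h3 hx0
    _ = _ := by ring
  calc |x ⬝ᵥ E *ᵥ y| = Real.sqrt ((x ⬝ᵥ E *ᵥ y)^2) := (Real.sqrt_sq_eq_abs _).symm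
  _ ≤ Real.sqrt ((∑ i, ∑ j, (E i j)^2) * ((∑ i, x i^2) * (∑ j, (y j)^2))) :=
      Real.sqrt_le_sqrt hz
  _ = frobNorm E * (Real.sqrt (∑ i, x i ^ 2) * Real.sqrt (∑ i, y i ^ 2)) := by
      rw [Real.sqrt_mul hE0, Real.sqrt_mul hx0]; rfl

lemma key2 {d : ℕ} (U : Matrix (Fin d) (Fin d) ℝ) (hUU : star U * U = 1)
    (D : Fin d → ℝ) (m m' : Fin d → ℝ) :
    (U *ᵥ m) ⬝ᵥ (U * Matrix.diagonal D * star U) *ᵥ (U *ᵥ m') = ∑ i, D i * (m i * m' i) := by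
  have hsU : star U = Uᵀ := by
    rw [Matrix.star_eq_conjTranspose, Matrix.conjTranspose_eq_transpose_of_trivial]
  have h1 : (U * Matrix.diagonal D * star U) *ᵥ (U *ᵥ m') = U *ᵥ (Matrix.diagonal D *ᵥ m') := by
    rw [Matrix.mulVec_mulVec, mul_assoc, mul_assoc, hUU, mul_one, ← Matrix.mulVec_mulVec]
  rw [h1, Matrix.dotProduct_mulVec]
  have h2 : (U *ᵥ m) ᵥ* U = m := by
    rw [← Matrix.mulVec_transpose, Matrix.mulVec_mulVec, ← hsU, hUU, Matrix.one_mulVec]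
  rw [h2]
  simp only [dotProduct, Matrix.mulVec_diagonal]
  exact Finset.sum_congr rfl fun i _ => by ring

lemma norm2 {d : ℕ} (U : Matrix (Fin d) (Fin d) ℝ) (hUU : star U * U = 1)
    (hUUt : U * star U = 1) (m : Fin d → ℝ) :
    ∑ i, ((U *ᵥ m) i)^2 = ∑ i, (m i)^2 := by
  have h := key2 U hUU (fun _ => 1) m m
  rw [Matrix.diagonal_one, mul_one, hUUt, Matrix.one_mulVec] at h
  calc ∑ i, ((U *ᵥ m) i)^2 = (U *ᵥ m) ⬝ᵥ (U *ᵥ m) := by simp [dotProduct, pow_two]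
  _ = ∑ i, (1:ℝ) * (m i * m i) := h
  _ = ∑ i, (m i)^2 := Finset.sum_congr rfl fun i _ => by ring

end aux

set_option maxHeartbeats 1000000

/-- **Deterministic core of the one-round weak private preconditioning step.**
Let `I ⪯ S ⪯ κ·I` with `κ ≥ 20`, and let `Shat` be symmetric with
`‖Shat - S‖_F ≤ 0.01·κ`. Let `P` be the orthogonal projection onto the span of the
eigenvectors of `Shat` with eigenvalue at least `κ/2` (expressed via the spectral
decomposition of `Shat`), and set `A₀ = 0.9·P + (I - P)`. Then
`0.85·I ⪯ A₀ S A₀ ⪯ 0.83·κ·I`; consequently `A = √1.19 · A₀` satisfies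
`I ⪯ A S A ⪯ 0.99·κ·I`. -/
theorem weak_preconditioning {d : ℕ} (κ : ℝ) (hκ : 20 ≤ κ)
    (S Shat : Matrix (Fin d) (Fin d) ℝ) (hShat : Shat.IsHermitian)
    (h₁ : psdLE 1 S) (h₂ : psdLE S (κ • 1))
    (herr : frobNorm (Shat - S) ≤ 0.01 * κ)
    (P : Matrix (Fin d) (Fin d) ℝ)
    (hP : P = (hShat.eigenvectorUnitary : Matrix (Fin d) (Fin d) ℝ) *
        Matrix.diagonal (fun i => if κ / 2 ≤ hShat.eigenvalues i then (1 : ℝ) else 0) *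
        star (hShat.eigenvectorUnitary : Matrix (Fin d) (Fin d) ℝ))
    (A₀ A : Matrix (Fin d) (Fin d) ℝ)
    (hA₀ : A₀ = (0.9 : ℝ) • P + (1 - P))
    (hA : A = Real.sqrt 1.19 • A₀) :
    (psdLE ((0.85 : ℝ) • 1) (A₀ * S * A₀) ∧ psdLE (A₀ * S * A₀) ((0.83 * κ) • 1))
    ∧ (psdLE 1 (A * S * A) ∧ psdLE (A * S * A) ((0.99 * κ) • 1)) := by
  have hκ0 : (0:ℝ) < κ := by linarith
  set U : Matrix (Fin d) (Fin d) ℝ := (hShat.eigenvectorUnitary : Matrix (Fin d) (Fin d) ℝ)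
    with hUdef
  set lam : Fin d → ℝ := hShat.eigenvalues with hlamdef
  have hUU : star U * U = 1 := Unitary.coe_star_mul_self _
  have hUUt : U * star U = 1 := Unitary.coe_mul_star_self _
  have hspec : Shat = U * Matrix.diagonal lam * star U := by
    simpa using hShat.spectral_theorem
  set μ : Fin d → ℝ := fun i => if κ / 2 ≤ lam i then 0.9 else 1 with hμdef
  -- A₀ in diagonal form
  have hA₀diag : A₀ = U * Matrix.diagonal μ * star U := by
    have h1 : (1 : Matrix (Fin d) (Fin d) ℝ)
        = U * Matrix.diagonal (fun _ => (1:ℝ)) * star U := by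
      rw [Matrix.diagonal_one, mul_one, hUUt]
    rw [hA₀, hP, h1]
    have comb : ∀ X Y : Matrix (Fin d) (Fin d) ℝ,
        (0.9:ℝ) • (U * X * star U) + (U * Y * star U - U * X * star U)
          = U * ((0.9:ℝ) • X + (Y - X)) * star U := by
      intro X Y
      simp only [Matrix.mul_add, Matrix.add_mul, Matrix.mul_sub, Matrix.sub_mul,
        Matrix.mul_smul, Matrix.smul_mul]
    rw [comb]
    congr 2
    ext i j
    simp only [Matrix.add_apply, Matrix.sub_apply, Matrix.smul_apply, Matrix.diagonal_apply,
      hμdef, smul_eq_mul]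
    split_ifs <;> norm_num
  -- real symmetry helpers
  have hermOf : ∀ M : Matrix (Fin d) (Fin d) ℝ, Mᵀ = M → M.IsHermitian := fun M h => by
    rwa [Matrix.IsHermitian, Matrix.conjTranspose_eq_transpose_of_trivial]
  have hsU : star U = Uᵀ := by
    rw [Matrix.star_eq_conjTranspose, Matrix.conjTranspose_eq_transpose_of_trivial]
  have hdiagt : ∀ D : Fin d → ℝ, (U * Matrix.diagonal D * star U)ᵀ
      = U * Matrix.diagonal D * star U := by
    intro D
    rw [hsU, Matrix.transpose_mul, Matrix.transpose_mul, Matrix.transpose_transpose,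
      Matrix.diagonal_transpose, Matrix.mul_assoc]
  have hA₀t : A₀ᵀ = A₀ := by rw [hA₀diag]; exact hdiagt μ
  have hSherm : S.IsHermitian := by
    have := h₁.1.add Matrix.isHermitian_one
    simpa using this
  have hSt : Sᵀ = S := by
    have := hSherm
    rwa [Matrix.IsHermitian, Matrix.conjTranspose_eq_transpose_of_trivial] at this
  have hM0t : (A₀ * S * A₀)ᵀ = A₀ * S * A₀ := by
    rw [Matrix.transpose_mul, Matrix.transpose_mul, hA₀t, hSt, Matrix.mul_assoc]
  -- quadratic form expansions of the PSD hypotheses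
  have hS_lb : ∀ x : Fin d → ℝ, ∑ i, x i ^ 2 ≤ x ⬝ᵥ S *ᵥ x := by
    intro x
    have h0 := (Matrix.posSemidef_iff_dotProduct_mulVec.mp h₁).2 x
    simp only [Matrix.sub_mulVec, Matrix.one_mulVec, dotProduct_sub, star_trivial] at h0
    have hx : x ⬝ᵥ x = ∑ i, x i ^ 2 := by simp [dotProduct, pow_two]
    linarith [h0]
  have hS_ub : ∀ x : Fin d → ℝ, x ⬝ᵥ S *ᵥ x ≤ κ * ∑ i, x i ^ 2 := by
    intro x
    have h0 := (Matrix.posSemidef_iff_dotProduct_mulVec.mp h₂).2 x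
    simp only [Matrix.sub_mulVec, Matrix.smul_mulVec, Matrix.one_mulVec, dotProduct_sub,
      dotProduct_smul, star_trivial, smul_eq_mul] at h0
    have hx : x ⬝ᵥ x = ∑ i, x i ^ 2 := by simp [dotProduct, pow_two]
    rw [hx] at h0
    linarith [h0]
  -- Frobenius bilinear bound
  have hE : ∀ x y : Fin d → ℝ, |x ⬝ᵥ (Shat - S) *ᵥ y|
      ≤ 0.01 * κ * (Real.sqrt (∑ i, x i ^ 2) * Real.sqrt (∑ i, y i ^ 2)) :=
    fun x y => le_trans (frob_bilin_bound _ x y)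
      (mul_le_mul_of_nonneg_right herr (by positivity))
  -- eigenvalue bounds
  have hlam_bounds : ∀ i, 1 - 0.01 * κ ≤ lam i ∧ lam i ≤ 1.01 * κ := by
    intro i
    set e : Fin d → ℝ := U *ᵥ Pi.single i 1 with hedef
    have hesq : ∑ j, (e j)^2 = 1 := by
      rw [hedef, norm2 U hUU hUUt]
      simp [Pi.single_apply, sq]
    have heShat : e ⬝ᵥ Shat *ᵥ e = lam i := by
      rw [hedef, hspec, key2 U hUU]
      simp [Pi.single_apply]
    have heS1 := hS_lb e
    have heS2 := hS_ub e
    rw [hesq] at heS1 heS2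
    have heE := hE e e
    rw [hesq] at heE
    simp only [Real.sqrt_one, mul_one] at heE
    have hsplit : e ⬝ᵥ (Shat - S) *ᵥ e = lam i - e ⬝ᵥ S *ᵥ e := by
      rw [Matrix.sub_mulVec, dotProduct_sub, heShat]
    rw [hsplit] at heE
    obtain ⟨hE1, hE2⟩ := abs_le.mp heE
    constructor <;> linarith
  -- main per-vector bound
  have hquad : ∀ v : Fin d → ℝ, v ⬝ᵥ (A₀ * S * A₀) *ᵥ v = (A₀ *ᵥ v) ⬝ᵥ S *ᵥ (A₀ *ᵥ v) := by
    intro v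
    rw [← Matrix.mulVec_mulVec, ← Matrix.mulVec_mulVec, Matrix.dotProduct_mulVec,
      ← Matrix.mulVec_transpose, hA₀t]
  have hmain : ∀ v : Fin d → ℝ,
      0.85 * (∑ i, (v i)^2) ≤ v ⬝ᵥ (A₀ * S * A₀) *ᵥ v ∧
      v ⬝ᵥ (A₀ * S * A₀) *ᵥ v ≤ 0.83 * κ * (∑ i, (v i)^2) := by
    intro v
    set c : Fin d → ℝ := star U *ᵥ v with hcdef
    set mw : Fin d → ℝ := fun i => μ i * c i with hmwdef
    set a : ℝ := ∑ i, (if κ / 2 ≤ lam i then (c i)^2 else 0) with hadef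
    set b : ℝ := ∑ i, (if κ / 2 ≤ lam i then 0 else (c i)^2) with hbdef
    set T : ℝ := ∑ i, (c i)^2 with hTdef
    have ha0 : 0 ≤ a := Finset.sum_nonneg fun i _ => by
      split_ifs; exacts [sq_nonneg _, le_refl 0]
    have hb0 : 0 ≤ b := Finset.sum_nonneg fun i _ => by
      split_ifs; exacts [le_refl 0, sq_nonneg _]
    have hab : a + b = T := by
      rw [hadef, hbdef, hTdef, ← Finset.sum_add_distrib]
      exact Finset.sum_congr rfl fun i _ => by split_ifs <;> ring
    have hT0 : 0 ≤ T := by linarith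
    have hv : v = U *ᵥ c := by
      rw [hcdef, Matrix.mulVec_mulVec, hUUt, Matrix.one_mulVec]
    have hvsq : ∑ i, (v i)^2 = T := by
      have h := norm2 U hUU hUUt c
      rw [← hv] at h
      exact h
    have hw : A₀ *ᵥ v = U *ᵥ mw := by
      rw [hA₀diag, ← Matrix.mulVec_mulVec, ← Matrix.mulVec_mulVec, ← hcdef]
      have hdc : Matrix.diagonal μ *ᵥ c = mw := funext fun i => Matrix.mulVec_diagonal _ _ _
      rw [hdc]
    have hwsq : ∑ i, ((A₀ *ᵥ v) i)^2 = 0.81 * a + b := by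
      rw [hw, norm2 U hUU hUUt, hadef, hbdef, Finset.mul_sum, ← Finset.sum_add_distrib]
      exact Finset.sum_congr rfl fun i _ => by
        simp only [hmwdef, hμdef]; split_ifs <;> ring
    have hwShat : (A₀ *ᵥ v) ⬝ᵥ Shat *ᵥ (A₀ *ᵥ v) = ∑ i, lam i * (mw i * mw i) := by
      rw [hw, hspec, key2 U hUU]
    have hsum_ub : ∑ i, lam i * (mw i * mw i) ≤ 0.8181 * κ * a + 0.5 * κ * b := by
      rw [hadef, hbdef, Finset.mul_sum, Finset.mul_sum, ← Finset.sum_add_distrib]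
      refine Finset.sum_le_sum fun i _ => ?_
      simp only [hmwdef, hμdef]
      obtain ⟨hl1, hl2⟩ := hlam_bounds i
      split_ifs with h
      · nlinarith [sq_nonneg (c i), mul_le_mul_of_nonneg_right hl2 (sq_nonneg (c i))]
      · have : lam i ≤ κ / 2 := le_of_lt (not_le.mp h)
        nlinarith [sq_nonneg (c i), mul_le_mul_of_nonneg_right this (sq_nonneg (c i))]
    have hsum_lb : 0.405 * κ * a + (1 - 0.01 * κ) * b ≤ ∑ i, lam i * (mw i * mw i) := by
      rw [hadef, hbdef, Finset.mul_sum, Finset.mul_sum, ← Finset.sum_add_distrib]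
      refine Finset.sum_le_sum fun i _ => ?_
      simp only [hmwdef, hμdef]
      obtain ⟨hl1, hl2⟩ := hlam_bounds i
      split_ifs with h
      · nlinarith [sq_nonneg (c i), mul_le_mul_of_nonneg_right h (sq_nonneg (c i))]
      · nlinarith [sq_nonneg (c i), mul_le_mul_of_nonneg_right hl1 (sq_nonneg (c i))]
    -- E bound on w
    have hwE : |(A₀ *ᵥ v) ⬝ᵥ (Shat - S) *ᵥ (A₀ *ᵥ v)| ≤ 0.01 * κ * (0.81 * a + b) := by
      have h := hE (A₀ *ᵥ v) (A₀ *ᵥ v)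
      rw [hwsq] at h
      rwa [Real.mul_self_sqrt (by linarith)] at h
    have hsplitw : (A₀ *ᵥ v) ⬝ᵥ (Shat - S) *ᵥ (A₀ *ᵥ v)
        = (∑ i, lam i * (mw i * mw i)) - (A₀ *ᵥ v) ⬝ᵥ S *ᵥ (A₀ *ᵥ v) := by
      rw [Matrix.sub_mulVec, dotProduct_sub, hwShat]
    rw [hsplitw] at hwE
    obtain ⟨hE1, hE2⟩ := abs_le.mp hwE
    rw [hquad v, hvsq]
    constructor
    · rcases le_or_gt a (0.7 * T) with hc | hc
      · have h1 := hS_lb (A₀ *ᵥ v)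
        rw [hwsq] at h1
        linarith
      · nlinarith [mul_nonneg hκ0.le hb0, mul_nonneg hκ0.le ha0,
          (mul_pos hκ0 (sub_pos.mpr hc)).le,
          mul_nonneg (by linarith : (0:ℝ) ≤ κ - 20) hT0]
    · nlinarith [mul_nonneg hκ0.le hb0, mul_nonneg hκ0.le ha0]
  -- assemble
  have hM0herm : (A₀ * S * A₀).IsHermitian := hermOf _ hM0t
  have hASA : A * S * A = (1.19 : ℝ) • (A₀ * S * A₀) := by
    rw [hA, Matrix.smul_mul, Matrix.smul_mul, Matrix.mul_smul, smul_smul,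
      Real.mul_self_sqrt (by norm_num)]
  have hvsq' : ∀ x : Fin d → ℝ, x ⬝ᵥ x = ∑ i, x i ^ 2 := fun x => by
    simp [dotProduct, pow_two]
  have hsub1 : ∀ (M : Matrix (Fin d) (Fin d) ℝ) (t : ℝ) (x : Fin d → ℝ),
      x ⬝ᵥ (M - t • 1) *ᵥ x = x ⬝ᵥ M *ᵥ x - t * ∑ i, x i ^ 2 := by
    intro M t x
    rw [Matrix.sub_mulVec, dotProduct_sub, Matrix.smul_mulVec, Matrix.one_mulVec,
      dotProduct_smul, smul_eq_mul, hvsq' x]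
  have hsub2 : ∀ (M : Matrix (Fin d) (Fin d) ℝ) (t : ℝ) (x : Fin d → ℝ),
      x ⬝ᵥ (t • 1 - M) *ᵥ x = t * (∑ i, x i ^ 2) - x ⬝ᵥ M *ᵥ x := by
    intro M t x
    rw [Matrix.sub_mulVec, dotProduct_sub, Matrix.smul_mulVec, Matrix.one_mulVec,
      dotProduct_smul, smul_eq_mul, hvsq' x]
  have hxsq0 : ∀ x : Fin d → ℝ, (0:ℝ) ≤ ∑ i, x i ^ 2 :=
    fun x => Finset.sum_nonneg fun i _ => sq_nonneg _
  refine ⟨⟨Matrix.posSemidef_iff_dotProduct_mulVec.mpr ⟨?_, fun x => ?_⟩, Matrix.posSemidef_iff_dotProduct_mulVec.mpr ⟨?_, fun x => ?_⟩⟩,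
    ⟨Matrix.posSemidef_iff_dotProduct_mulVec.mpr ⟨?_, fun x => ?_⟩, Matrix.posSemidef_iff_dotProduct_mulVec.mpr ⟨?_, fun x => ?_⟩⟩⟩
  · exact hermOf _ (by rw [Matrix.transpose_sub, Matrix.transpose_smul, Matrix.transpose_one,
      hM0t])
  · simp only [star_trivial]
    rw [hsub1]
    linarith [(hmain x).1]
  · exact hermOf _ (by rw [Matrix.transpose_sub, Matrix.transpose_smul, Matrix.transpose_one,
      hM0t])
  · simp only [star_trivial]
    rw [hsub2]
    linarith [(hmain x).2]
  · refine hermOf _ ?_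
    rw [hASA, Matrix.transpose_sub, Matrix.transpose_smul, Matrix.transpose_one, hM0t]
  · simp only [star_trivial]
    rw [hASA, Matrix.sub_mulVec, dotProduct_sub, Matrix.one_mulVec, Matrix.smul_mulVec,
      dotProduct_smul, smul_eq_mul, hvsq' x]
    nlinarith [(hmain x).1, hxsq0 x]
  · refine hermOf _ ?_
    rw [hASA, Matrix.transpose_sub, Matrix.transpose_smul, Matrix.transpose_smul,
      Matrix.transpose_one, hM0t]
  · simp only [star_trivial]
    rw [hASA, hsub2]
    rw [Matrix.smul_mulVec, dotProduct_smul, smul_eq_mul]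
    nlinarith [(hmain x).2, hxsq0 x, mul_nonneg hκ0.le (hxsq0 x)]

end
end

section
/- Let Σ be a d×d symmetric positive definite real matrix, let A be a d×d symmetric invertible real matrix, and let Σ₁ be any d×d symmetric real matrix. Then ‖Σ₁ − AΣA‖_F ≥ λ_min(AΣA) · ‖Σ^{-1/2} A^{-1} Σ₁ A^{-1} Σ^{-1/2} − I‖_F, where λ_min denotes the smallest eigenvalue. (This translates an absolute Frobenius-norm guarantee for a preconditioned covariance estimate into a relative Frobenius-norm guarantee for the original covariance.) -/
open MeasureTheory Matrix Real
open scoped ENNReal NNReal BigOperators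

noncomputable section
section
open scoped ComplexOrder
def Matrix.PosSemidef.sqrt {n 𝕜 : Type*} [Fintype n] [DecidableEq n] [RCLike 𝕜]
    {A : Matrix n n 𝕜} (hA : A.PosSemidef) : Matrix n n 𝕜 :=
  (hA.1.eigenvectorUnitary : Matrix n n 𝕜) *
    diagonal (fun i => ((Real.sqrt (hA.1.eigenvalues i) : ℝ) : 𝕜)) *
    (star hA.1.eigenvectorUnitary : Matrix n n 𝕜)
end

lemma Matrix.PosSemidef.posSemidef_sqrt {n : Type*} [Fintype n] [DecidableEq n]
    {A : Matrix n n ℝ} (hA : A.PosSemidef) : hA.sqrt.PosSemidef := by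
  unfold Matrix.PosSemidef.sqrt
  rw [Matrix.star_eq_conjTranspose]
  exact (Matrix.PosSemidef.diagonal fun i => by simp [Real.sqrt_nonneg]).mul_mul_conjTranspose_same _

lemma Matrix.PosSemidef.sqrt_mul_self {n : Type*} [Fintype n] [DecidableEq n]
    {A : Matrix n n ℝ} (hA : A.PosSemidef) : hA.sqrt * hA.sqrt = A := by
  unfold Matrix.PosSemidef.sqrt
  have hU : (star hA.1.eigenvectorUnitary : Matrix n n ℝ) * (hA.1.eigenvectorUnitary : Matrix n n ℝ) = 1 :=
    Unitary.coe_star_mul_self _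
  set U := (hA.1.eigenvectorUnitary : Matrix n n ℝ)
  set V := (star hA.1.eigenvectorUnitary : Matrix n n ℝ)
  rw [show ∀ D : Matrix n n ℝ, U * D * V * (U * D * V) = U * (D * (V * U) * D) * V from
      fun D => by simp only [Matrix.mul_assoc],
    hU, Matrix.mul_one, diagonal_mul_diagonal]
  conv_rhs => rw [hA.1.spectral_theorem]
  rw [Unitary.conjStarAlgAut_apply]
  congr 3
  funext i
  simp [Real.mul_self_sqrt (hA.eigenvalues_nonneg i)]

end

noncomputable section
namespace PreAux
open Matrix
variable {n : Type*} [Fintype n] [DecidableEq n]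

lemma trace_nonneg_of_posSemidef {M : Matrix n n ℝ} (hM : M.PosSemidef) : 0 ≤ M.trace := by
  rw [Matrix.trace]
  exact Finset.sum_nonneg fun i _ => hM.diag_nonneg

lemma trace_mul_nonneg {A B : Matrix n n ℝ} (hA : A.PosSemidef) (hB : B.PosSemidef) :
    0 ≤ (A * B).trace := by
  obtain ⟨C, rfl⟩ : ∃ C : Matrix n n ℝ, B = Cᴴ * C :=
    ⟨hB.sqrt, by rw [hB.posSemidef_sqrt.1.eq, hB.sqrt_mul_self]⟩
  rw [← mul_assoc, trace_mul_comm, ← mul_assoc]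
  exact trace_nonneg_of_posSemidef (hA.mul_mul_conjTranspose_same C)

lemma sub_iInf_smul_posSemidef {M : Matrix n n ℝ} (hM : M.IsHermitian) [Nonempty n] :
    (M - (⨅ i, hM.eigenvalues i) • 1).PosSemidef := by
  set l := ⨅ i, hM.eigenvalues i with hl
  have key : M - l • 1 =
      (hM.eigenvectorUnitary : Matrix n n ℝ) * diagonal (fun i => hM.eigenvalues i - l) *
        (hM.eigenvectorUnitary : Matrix n n ℝ)ᴴ := by
    have hU : (hM.eigenvectorUnitary : Matrix n n ℝ) *
        (hM.eigenvectorUnitary : Matrix n n ℝ)ᴴ = 1 := by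
      simpa [Matrix.star_eq_conjTranspose] using
        (Matrix.mem_unitaryGroup_iff).mp hM.eigenvectorUnitary.2
    have hdiag : diagonal (fun i => hM.eigenvalues i - l) =
        diagonal hM.eigenvalues - l • 1 := by
      rw [Matrix.smul_one_eq_diagonal, ← Matrix.diagonal_sub]
    rw [hdiag, mul_sub, sub_mul]
    congr 1
    · conv_rhs => rw [← Matrix.star_eq_conjTranspose]
      have := hM.spectral_theorem
      rw [RCLike.ofReal_real_eq_id] at this
      simpa [Function.comp] using this
    · rw [Matrix.mul_smul, Matrix.smul_mul, mul_one, hU]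
  rw [key]
  refine (Matrix.PosSemidef.diagonal fun i => ?_).mul_mul_conjTranspose_same _
  exact sub_nonneg.2 (ciInf_le (Set.Finite.bddBelow (Set.finite_range _)) i)

lemma trace_quad_ge {F X : Matrix n n ℝ} {l : ℝ} (hl : 0 ≤ l)
    (hR : (Xᴴ * X - l • 1).PosSemidef) :
    l ^ 2 * (Fᴴ * F).trace ≤ (Fᴴ * (Xᴴ * X) * F * (Xᴴ * X)).trace := by
  set R := Xᴴ * X with hRdef
  have hRpsd : R.PosSemidef := posSemidef_conjTranspose_mul_self X
  have h1 : (Fᴴ * R * F).PosSemidef := hRpsd.conjTranspose_mul_mul_same F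
  have h2 : (F * Fᴴ).PosSemidef := posSemidef_self_mul_conjTranspose F
  have stepA : l * (Fᴴ * R * F).trace ≤ (Fᴴ * R * F * R).trace := by
    have := trace_mul_nonneg h1 hR
    rw [mul_sub, Matrix.trace_sub, Matrix.mul_smul, Matrix.trace_smul, mul_one,
      smul_eq_mul] at this
    linarith
  have stepB : l * (F * Fᴴ).trace ≤ (F * Fᴴ * R).trace := by
    have := trace_mul_nonneg h2 hR
    rw [mul_sub, Matrix.trace_sub, Matrix.mul_smul, Matrix.trace_smul, mul_one,
      smul_eq_mul] at this
    linarith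
  have cyc1 : (Fᴴ * R * F).trace = (F * Fᴴ * R).trace := by
    rw [trace_mul_comm, ← mul_assoc]
  have cyc2 : (F * Fᴴ).trace = (Fᴴ * F).trace := trace_mul_comm F Fᴴ
  calc l ^ 2 * (Fᴴ * F).trace = l * (l * (F * Fᴴ).trace) := by rw [cyc2]; ring
    _ ≤ l * (F * Fᴴ * R).trace := mul_le_mul_of_nonneg_left stepB hl
    _ = l * (Fᴴ * R * F).trace := by rw [cyc1]
    _ ≤ (Fᴴ * R * F * R).trace := stepA

lemma frob_trace {d : ℕ} (G : Matrix (Fin d) (Fin d) ℝ) :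
    (Gᴴ * G).trace = ∑ i, ∑ j, (G i j) ^ 2 := by
  simp only [Matrix.trace, Matrix.diag, Matrix.mul_apply, Matrix.conjTranspose_apply,
    star_trivial, sq]
  rw [Finset.sum_comm]

end PreAux
end

noncomputable section

/-- **Translating an absolute Frobenius-norm guarantee of a preconditioned covariance
estimate into a relative one.** For symmetric positive definite `S`, symmetric invertible
`A`, and any symmetric `S₁`,
`‖S₁ - A S A‖_F ≥ λ_min(A S A) · ‖S^{-1/2} A⁻¹ S₁ A⁻¹ S^{-1/2} - I‖_F`. -/
theorem precondition_error_translation {d : ℕ}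
    (S S₁ A : Matrix (Fin d) (Fin d) ℝ) (hS : S.PosDef) (hA : A.IsHermitian)
    (hAunit : IsUnit A.det) (hS₁ : S₁.IsHermitian)
    (hASA : (A * S * A).IsHermitian) :
    (⨅ i, hASA.eigenvalues i) *
        frobNorm ((hS.posSemidef.sqrt)⁻¹ * A⁻¹ * S₁ * A⁻¹ * (hS.posSemidef.sqrt)⁻¹ - 1)
      ≤ frobNorm (S₁ - A * S * A) := by
  classical
  rcases Nat.eq_zero_or_pos d with hd | hd
  · subst hd
    simp [frobNorm]
  haveI : Nonempty (Fin d) := Fin.pos_iff_nonempty.mp hd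
  set T := hS.posSemidef.sqrt with hTdef
  have hT : T.PosSemidef := hS.posSemidef.posSemidef_sqrt
  have hTT : T * T = S := hS.posSemidef.sqrt_mul_self
  have hdetS : IsUnit S.det := isUnit_iff_ne_zero.mpr (ne_of_gt hS.det_pos)
  have hdetT : IsUnit T.det := by
    have h : T.det * T.det = S.det := by rw [← Matrix.det_mul, hTT]
    exact isUnit_of_mul_isUnit_left (h ▸ hdetS)
  clear_value T
  set X := A * T with hXdef
  have hXH : Xᴴ = T * A := by
    rw [hXdef, Matrix.conjTranspose_mul, hT.1.eq, hA.eq]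
  have hPXX : X * Xᴴ = A * S * A := by
    rw [hXH, hXdef]
    calc A * T * (T * A) = A * (T * T) * A := by
          simp only [Matrix.mul_assoc]
      _ = A * S * A := by rw [hTT]
  have hPsd : (A * S * A).PosSemidef := by
    rw [← hPXX]; exact Matrix.posSemidef_self_mul_conjTranspose X
  have hdetX : IsUnit X.det := by
    rw [hXdef, Matrix.det_mul]; exact hAunit.mul hdetT
  have hdetXH : IsUnit Xᴴ.det := by
    rw [Matrix.det_conjTranspose]; simpa using hdetX
  clear_value X
  set l := ⨅ i, hASA.eigenvalues i with hldef
  have hl0 : 0 ≤ l := le_ciInf fun i => hPsd.eigenvalues_nonneg i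
  clear_value l
  -- square root of P := A * S * A
  set W := hPsd.sqrt with hWdef
  have hW : W.PosSemidef := hPsd.posSemidef_sqrt
  have hWW : W * W = A * S * A := hPsd.sqrt_mul_self
  have hdetP : IsUnit (A * S * A).det := by
    rw [Matrix.det_mul, Matrix.det_mul]
    exact (hAunit.mul hdetS).mul hAunit
  have hdetW : IsUnit W.det := by
    have h : W.det * W.det = (A * S * A).det := by rw [← Matrix.det_mul, hWW]
    exact isUnit_of_mul_isUnit_left (h ▸ hdetP)
  clear_value W
  -- congruence: Xᴴ X - l • 1 is psd
  have cW : ∀ B : Matrix (Fin d) (Fin d) ℝ, W * (W⁻¹ * B) = B :=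
    fun B => Matrix.mul_nonsing_inv_cancel_left W B hdetW
  have cW' : ∀ B : Matrix (Fin d) (Fin d) ℝ, W⁻¹ * (W * B) = B :=
    fun B => Matrix.nonsing_inv_mul_cancel_left W B hdetW
  set Y := Xᴴ * W⁻¹ with hYdef
  have hYH : Yᴴ = W⁻¹ * X := by
    rw [hYdef, Matrix.conjTranspose_mul, Matrix.conjTranspose_nonsing_inv, hW.1.eq,
      Matrix.conjTranspose_conjTranspose]
  have hY : Y * (A * S * A - l • 1) * Yᴴ = Xᴴ * X - l • 1 := by
    rw [hYH, mul_sub, sub_mul]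
    congr 1
    · rw [hYdef, ← hWW]
      simp only [Matrix.mul_assoc, cW, cW']
    · rw [Matrix.mul_smul, Matrix.mul_one, Matrix.smul_mul]
      congr 1
      have hinv : W⁻¹ * W⁻¹ = Xᴴ⁻¹ * X⁻¹ := by
        rw [← Matrix.mul_inv_rev, ← Matrix.mul_inv_rev, hWW, hPXX]
      rw [hYdef, Matrix.mul_assoc, ← Matrix.mul_assoc W⁻¹ W⁻¹ X, hinv,
        Matrix.mul_assoc, Matrix.nonsing_inv_mul X hdetX, Matrix.mul_one,
        Matrix.mul_nonsing_inv Xᴴ hdetXH]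
  have hRpsd : (Xᴴ * X - l • 1).PosSemidef := by
    rw [← hY, hldef]
    exact (PreAux.sub_iInf_smul_posSemidef hASA).mul_mul_conjTranspose_same Y
  -- the preconditioned error matrix
  set F := T⁻¹ * A⁻¹ * S₁ * A⁻¹ * T⁻¹ - 1 with hFdef
  have cT : ∀ B : Matrix (Fin d) (Fin d) ℝ, T * (T⁻¹ * B) = B :=
    fun B => Matrix.mul_nonsing_inv_cancel_left T B hdetT
  have cT' : ∀ B : Matrix (Fin d) (Fin d) ℝ, T⁻¹ * (T * B) = B :=
    fun B => Matrix.nonsing_inv_mul_cancel_left T B hdetT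
  have cA : ∀ B : Matrix (Fin d) (Fin d) ℝ, A * (A⁻¹ * B) = B :=
    fun B => Matrix.mul_nonsing_inv_cancel_left A B hAunit
  have cA' : ∀ B : Matrix (Fin d) (Fin d) ℝ, A⁻¹ * (A * B) = B :=
    fun B => Matrix.nonsing_inv_mul_cancel_left A B hAunit
  have hAinv : A⁻¹ * A = 1 := Matrix.nonsing_inv_mul A hAunit
  have hTinv : T⁻¹ * T = 1 := Matrix.nonsing_inv_mul T hdetT
  have hE : S₁ - A * S * A = X * F * Xᴴ := by
    rw [hFdef, mul_sub, sub_mul, Matrix.mul_one, hPXX, hXH, hXdef]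
    congr 1
    simp only [Matrix.mul_assoc, cT, cT', cA, cA', hAinv, hTinv, Matrix.mul_one]
  -- assemble
  have hlower := PreAux.trace_quad_ge (F := F) (X := X) hl0 hRpsd
  have hcyc : ((X * F * Xᴴ)ᴴ * (X * F * Xᴴ)).trace
      = (Fᴴ * (Xᴴ * X) * F * (Xᴴ * X)).trace := by
    rw [Matrix.conjTranspose_mul, Matrix.conjTranspose_mul,
      Matrix.conjTranspose_conjTranspose, Matrix.mul_assoc, Matrix.trace_mul_comm]
    simp only [Matrix.mul_assoc]
  calc l * frobNorm F = Real.sqrt (l ^ 2 * (Fᴴ * F).trace) := by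
        rw [frobNorm, PreAux.frob_trace, Real.sqrt_mul (sq_nonneg l), Real.sqrt_sq hl0]
    _ ≤ Real.sqrt (((X * F * Xᴴ)ᴴ * (X * F * Xᴴ)).trace) :=
        Real.sqrt_le_sqrt (by rw [hcyc]; exact hlower)
    _ = frobNorm (X * F * Xᴴ) := by rw [frobNorm, PreAux.frob_trace]
    _ = frobNorm (S₁ - A * S * A) := by rw [hE]


end
end
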